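/- Let δ > 0 and define the operator B_α on L²(S_δ) by B_α[h] = Σ_{m=2}^∞ m² A*_m[e^{-αm|·|} A_m[h]], where A_m[h](ξ) = H(mξ) χ_{S_δ \ (1-1/m)S_δ}(ξ) and H is the L²_loc extension of h via the Riesz basis. Then B_α is bounded with operator norm at most 4B⁴ e^{-αδ}(1 - e^{-αδ})^{-2}. -/
import Mathlib


/-- The operator `B_α[h] = ∑_{m=2}^∞ m² A*_m[e^{-αm|·|} A_m[h]]` on `L²(S_δ)` is bounded
with norm at most `4B⁴ e^{-αδ}(1-e^{-αδ})⁻²`.  Here the Hilbert space `H` plays the role of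
`L²(S_δ)`, `A m` the role of the operator `A_m` (which satisfies
`‖A_m h‖² ≤ 4(m-1)m⁻²B⁴‖h‖²`), and `D m` the role of multiplication by `e^{-αm|·|}` on the
support of `A_m`'s output (where `m|ξ| ≥ (m-1)δ`, so `‖D m h‖ ≤ e^{-αδ(m-1)}‖h‖`); the sum
is indexed by `m = n + 2`, `n ∈ ℕ`. -/
theorem stmt_8 (H : Type*) [NormedAddCommGroup H] [InnerProductSpace ℂ H] [CompleteSpace H]
    (δ α B : ℝ) (hδ : 0 < δ) (hα : 0 < α) (hB : 1 ≤ B)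
    (A D : ℕ → H →L[ℂ] H)
    (hA : ∀ m : ℕ, 2 ≤ m → ∀ h : H,
      ‖A m h‖ ^ 2 ≤ 4 * ((m : ℝ) - 1) * ((m : ℝ) ^ 2)⁻¹ * B ^ 4 * ‖h‖ ^ 2)
    (hD : ∀ m : ℕ, 2 ≤ m → ∀ h : H,
      ‖D m h‖ ≤ Real.exp (-(α * δ * ((m : ℝ) - 1))) * ‖h‖)
    (Bop : H → H)
    (hBop : ∀ h : H, HasSum
      (fun n : ℕ => (((n + 2 : ℕ) : ℂ) ^ 2) •
        (ContinuousLinearMap.adjoint (A (n + 2))) (D (n + 2) (A (n + 2) h)))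
      (Bop h)) :
    ∀ h : H, ‖Bop h‖ ≤
      4 * B ^ 4 * Real.exp (-(α * δ)) * ((1 - Real.exp (-(α * δ))) ^ 2)⁻¹ * ‖h‖ := by
  intro h
  set r := Real.exp (-(α * δ)) with hr_def
  have hr0 : 0 < r := Real.exp_pos _
  have hr1 : r < 1 := by
    rw [hr_def]
    exact Real.exp_lt_one_iff.mpr (by nlinarith)
  -- operator norm bound for A m
  have hAnorm : ∀ m : ℕ, 2 ≤ m →
      ‖A m‖ ≤ Real.sqrt (4 * ((m : ℝ) - 1) * ((m : ℝ) ^ 2)⁻¹ * B ^ 4) := by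
    intro m hm
    have hKnn : 0 ≤ 4 * ((m : ℝ) - 1) * ((m : ℝ) ^ 2)⁻¹ * B ^ 4 := by
      have h1m : (1:ℝ) ≤ (m:ℝ) := by exact_mod_cast Nat.one_le_of_lt hm
      have h2m : (0:ℝ) ≤ ((m:ℝ) ^ 2)⁻¹ := by positivity
      have h3m : (0:ℝ) ≤ B ^ 4 := by positivity
      exact mul_nonneg (mul_nonneg (by linarith) h2m) h3m
    refine ContinuousLinearMap.opNorm_le_bound _ (Real.sqrt_nonneg _) fun x => ?_
    have h1 := hA m hm x
    have h2 : ‖A m x‖ = Real.sqrt (‖A m x‖ ^ 2) := by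
      rw [Real.sqrt_sq (norm_nonneg _)]
    rw [h2]
    calc Real.sqrt (‖A m x‖ ^ 2)
        ≤ Real.sqrt (4 * ((m : ℝ) - 1) * ((m : ℝ) ^ 2)⁻¹ * B ^ 4 * ‖x‖ ^ 2) :=
          Real.sqrt_le_sqrt h1
      _ = Real.sqrt (4 * ((m : ℝ) - 1) * ((m : ℝ) ^ 2)⁻¹ * B ^ 4) * ‖x‖ := by
          rw [Real.sqrt_mul hKnn, Real.sqrt_sq (norm_nonneg _)]
  -- the dominating series
  have hgeo : HasSum (fun n : ℕ => (n : ℝ) * r ^ n) (r / (1 - r) ^ 2) :=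
    hasSum_coe_mul_geometric_of_norm_lt_one (by
      rw [Real.norm_eq_abs, abs_of_pos hr0]; exact hr1)
  have hshift : HasSum (fun n : ℕ => ((n + 1 : ℕ) : ℝ) * r ^ (n + 1)) (r / (1 - r) ^ 2) := by
    simpa using (hasSum_nat_add_iff' (f := fun n : ℕ => (n : ℝ) * r ^ n) 1).mpr hgeo
  have hg : HasSum (fun n : ℕ => 4 * B ^ 4 * ‖h‖ * (((n + 1 : ℕ) : ℝ) * r ^ (n + 1)))
      (4 * B ^ 4 * ‖h‖ * (r / (1 - r) ^ 2)) := hshift.mul_left _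
  -- termwise bound
  have hterm : ∀ n : ℕ,
      ‖(((n + 2 : ℕ) : ℂ) ^ 2) •
        (ContinuousLinearMap.adjoint (A (n + 2))) (D (n + 2) (A (n + 2) h))‖
      ≤ 4 * B ^ 4 * ‖h‖ * (((n + 1 : ℕ) : ℝ) * r ^ (n + 1)) := by
    intro n
    set m := n + 2 with hm_def
    have hm : 2 ≤ m := by omega
    have hm1 : (1:ℝ) ≤ (m:ℝ) := by exact_mod_cast Nat.one_le_of_lt hm
    set C := Real.sqrt (4 * ((m : ℝ) - 1) * ((m : ℝ) ^ 2)⁻¹ * B ^ 4) with hC_def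
    have hKnn : 0 ≤ 4 * ((m : ℝ) - 1) * ((m : ℝ) ^ 2)⁻¹ * B ^ 4 := by
      have h2m : (0:ℝ) ≤ ((m:ℝ) ^ 2)⁻¹ := by positivity
      have h3m : (0:ℝ) ≤ B ^ 4 := by positivity
      exact mul_nonneg (mul_nonneg (by linarith) h2m) h3m
    have hCsq : C ^ 2 = 4 * ((m : ℝ) - 1) * ((m : ℝ) ^ 2)⁻¹ * B ^ 4 :=
      Real.sq_sqrt hKnn
    have hC0 : 0 ≤ C := Real.sqrt_nonneg _
    have hAop := hAnorm m hm
    have hAadj : ‖ContinuousLinearMap.adjoint (A m)‖ ≤ C := by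
      rw [ContinuousLinearMap.adjoint.norm_map (A m)]; exact hAop
    set e := Real.exp (-(α * δ * ((m : ℝ) - 1))) with he_def
    have he0 : 0 ≤ e := le_of_lt (Real.exp_pos _)
    have h1 : ‖(ContinuousLinearMap.adjoint (A m)) (D m (A m h))‖
        ≤ C * ‖D m (A m h)‖ :=
      le_trans ((ContinuousLinearMap.adjoint (A m)).le_opNorm _)
        (mul_le_mul_of_nonneg_right hAadj (norm_nonneg _))
    have h2 : ‖D m (A m h)‖ ≤ e * ‖A m h‖ := hD m hm _
    have h3 : ‖A m h‖ ≤ C * ‖h‖ := by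
      have := (A m).le_opNorm h
      exact le_trans this (mul_le_mul_of_nonneg_right hAop (norm_nonneg _))
    have hnormsmul : ‖(((m : ℕ) : ℂ) ^ 2) •
        (ContinuousLinearMap.adjoint (A m)) (D m (A m h))‖
        = (m : ℝ) ^ 2 * ‖(ContinuousLinearMap.adjoint (A m)) (D m (A m h))‖ := by
      rw [norm_smul]
      congr 1
      rw [norm_pow, Complex.norm_natCast]
    rw [hnormsmul]
    have hchain : (m : ℝ) ^ 2 * ‖(ContinuousLinearMap.adjoint (A m)) (D m (A m h))‖
        ≤ (m : ℝ) ^ 2 * (C * (e * (C * ‖h‖))) := by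
      have : ‖(ContinuousLinearMap.adjoint (A m)) (D m (A m h))‖
          ≤ C * (e * (C * ‖h‖)) := by
        refine le_trans h1 (mul_le_mul_of_nonneg_left ?_ hC0)
        refine le_trans h2 (mul_le_mul_of_nonneg_left h3 he0)
      exact mul_le_mul_of_nonneg_left this (by positivity)
    refine le_trans hchain ?_
    have hm2pos : (0:ℝ) < (m : ℝ) ^ 2 := by positivity
    have heq : (m : ℝ) ^ 2 * (C * (e * (C * ‖h‖)))
        = 4 * ((m : ℝ) - 1) * B ^ 4 * e * ‖h‖ := by
      have : (m : ℝ) ^ 2 * (C * (e * (C * ‖h‖))) = C ^ 2 * (m : ℝ) ^ 2 * e * ‖h‖ := by ring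
      rw [this, hCsq]
      field_simp
    rw [heq]
    have hme : ((m : ℝ) - 1) = ((n + 1 : ℕ) : ℝ) := by
      push_cast [hm_def]; ring
    have her : e = r ^ (n + 1) := by
      rw [he_def, hr_def, ← Real.exp_nat_mul]
      congr 1
      rw [hme]
      push_cast
      ring
    rw [hme, her]
    exact le_of_eq (by push_cast; ring)
  -- summability of norms
  have hsummnorm : Summable (fun n : ℕ =>
      ‖(((n + 2 : ℕ) : ℂ) ^ 2) •
        (ContinuousLinearMap.adjoint (A (n + 2))) (D (n + 2) (A (n + 2) h))‖) :=
    Summable.of_nonneg_of_le (fun n => norm_nonneg _) hterm hg.summable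
  have hBopEq : Bop h = ∑' n : ℕ, (((n + 2 : ℕ) : ℂ) ^ 2) •
      (ContinuousLinearMap.adjoint (A (n + 2))) (D (n + 2) (A (n + 2) h)) :=
    (hBop h).tsum_eq.symm
  rw [hBopEq]
  calc ‖∑' n : ℕ, (((n + 2 : ℕ) : ℂ) ^ 2) •
        (ContinuousLinearMap.adjoint (A (n + 2))) (D (n + 2) (A (n + 2) h))‖
      ≤ ∑' n : ℕ, ‖(((n + 2 : ℕ) : ℂ) ^ 2) •
        (ContinuousLinearMap.adjoint (A (n + 2))) (D (n + 2) (A (n + 2) h))‖ :=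
        norm_tsum_le_tsum_norm hsummnorm
    _ ≤ ∑' n : ℕ, 4 * B ^ 4 * ‖h‖ * (((n + 1 : ℕ) : ℝ) * r ^ (n + 1)) :=
        Summable.tsum_le_tsum hterm hsummnorm hg.summable
    _ = 4 * B ^ 4 * ‖h‖ * (r / (1 - r) ^ 2) := hg.tsum_eq
    _ = 4 * B ^ 4 * r * ((1 - r) ^ 2)⁻¹ * ‖h‖ := by
        rw [div_eq_mul_inv]; ring
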